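/- Let k be an algebraically closed field and grade the polynomial ring k[x,y,z] by total degree. The degree-zero part of the localization of k[x,y,z] away from the element y·z is isomorphic as a k-algebra to the degree-zero part of the localization of k[x,y,z] away from the element (x² − y·z)·z. (Equivalently: the reducible curves {yz = 0} of degree 2 and {(x² − yz)z = 0} of degree 3 have isomorphic complements in ℙ², so the equal-degree conclusion of Lemma 2.1 fails for reducible curves.) -/

import Mathlib

open MvPolynomial

attribute [local instance] MvPolynomial.gradedAlgebra

/-- The degree-zero part `A_h` of the localization of `k[x,y,z]` away from `h`,
i.e. the coordinate ring of the affine variety `ℙ² ∖ V(h)`. -/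
noncomputable abbrev AwayRing (k : Type) [Field k] (h : MvPolynomial (Fin 3) k) : Type :=
  HomogeneousLocalization.Away (homogeneousSubmodule (Fin 3) k) h

noncomputable instance (k : Type) [Field k] (h : MvPolynomial (Fin 3) k) :
    Algebra k (AwayRing k h) :=
  ((algebraMap (homogeneousSubmodule (Fin 3) k 0) (AwayRing k h)).comp
    (algebraMap k (homogeneousSubmodule (Fin 3) k 0))).toAlgebra

namespace Rmk22

variable (k : Type) [Field k]

/-- Shorthand for the polynomial ring. -/
abbrev P3 := MvPolynomial (Fin 3) k

/-- The quadratic involution `x ↦ xz, y ↦ x² − yz, z ↦ z²`. -/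
noncomputable def φ : P3 k →ₐ[k] P3 k :=
  aeval ![X 0 * X 2, X 0 ^ 2 - X 1 * X 2, X 2 ^ 2]

/-- `f = yz`. -/
noncomputable abbrev fP : P3 k := X 1 * X 2

/-- `q = x² − yz`. -/
noncomputable abbrev qP : P3 k := X 0 ^ 2 - X 1 * X 2

/-- `g = (x² − yz)z`. -/
noncomputable abbrev gP : P3 k := qP k * X 2

lemma φ_X0 : φ k (X 0) = X 0 * X 2 := by simp [φ]
lemma φ_X1 : φ k (X 1) = X 0 ^ 2 - X 1 * X 2 := by simp [φ]
lemma φ_X2 : φ k (X 2) = X 2 ^ 2 := by simp [φ]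

lemma φ_f : φ k (fP k) = gP k * X 2 := by
  rw [map_mul, φ_X1, φ_X2]; ring

lemma φ_g : φ k (gP k) = fP k * X 2 ^ 4 := by
  rw [map_mul, map_sub, map_pow, map_mul, φ_X0, φ_X1, φ_X2]; ring

lemma hf : (fP k).IsHomogeneous 2 := by
  simpa using (isHomogeneous_X k (1 : Fin 3)).mul (isHomogeneous_X k (2 : Fin 3))

lemma hq : (qP k).IsHomogeneous 2 := by
  refine (isHomogeneous_X_pow (0 : Fin 3) 2).sub ?_
  simpa using (isHomogeneous_X k (1 : Fin 3)).mul (isHomogeneous_X k (2 : Fin 3))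

lemma hg : (gP k).IsHomogeneous 3 := by
  simpa using (hq k).mul (isHomogeneous_X k (2 : Fin 3))

lemma f_ne : fP k ≠ 0 := mul_ne_zero (X_ne_zero _) (X_ne_zero _)

lemma q_ne : qP k ≠ 0 := by
  intro h
  have h2 := congrArg (eval ![(1 : k), 0, 0]) h
  simp at h2

lemma g_ne : gP k ≠ 0 := mul_ne_zero (q_ne k) (X_ne_zero _)

lemma φ_mem {i : ℕ} {a : P3 k} (ha : a.IsHomogeneous i) : (φ k a).IsHomogeneous (2 * i) := by
  refine ha.aeval _ fun j => ?_
  fin_cases j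
  · simpa using (isHomogeneous_X k (0 : Fin 3)).mul (isHomogeneous_X k (2 : Fin 3))
  · exact hq k
  · simpa using isHomogeneous_X_pow (2 : Fin 3) 2

/-- Scaling: a degree-`i` homogeneous polynomial with every variable multiplied by `z³`
picks up a factor `z^(3i)`. -/
lemma aeval_scale {i : ℕ} {a : P3 k} (ha : a.IsHomogeneous i) :
    aeval (fun j => X 2 ^ 3 * X j) a = X 2 ^ (3 * i) * a := by
  conv_lhs => rw [← a.support_sum_monomial_coeff]
  conv_rhs => rw [← a.support_sum_monomial_coeff]
  rw [map_sum, Finset.mul_sum]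
  refine Finset.sum_congr rfl fun d hd => ?_
  have hdeg : ∑ j ∈ d.support, d j = i := by
    rw [← ha (mem_support_iff.mp hd), Finsupp.weight_apply]
    simp [Finsupp.sum]
  rw [aeval_monomial, monomial_eq]
  have h1 : (d.prod fun j e => (X 2 ^ 3 * X j : P3 k) ^ e) =
      (d.prod fun j e => ((X 2 : P3 k) ^ 3) ^ e) * d.prod fun j e => (X j : P3 k) ^ e := by
    rw [← Finsupp.prod_mul]
    exact Finsupp.prod_congr fun j _ => mul_pow _ _ _
  have h2 : (d.prod fun j e => ((X 2 : P3 k) ^ 3) ^ e) = (X 2 : P3 k) ^ (3 * i) := by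
    rw [Finsupp.prod, Finset.prod_pow_eq_pow_sum, hdeg, pow_mul]
  rw [h1, h2, algebraMap_eq]
  ring

lemma φφ {i : ℕ} {a : P3 k} (ha : a.IsHomogeneous i) :
    φ k (φ k a) = X 2 ^ (3 * i) * a := by
  have hcomp : φ k (φ k a) = aeval (fun j => X 2 ^ 3 * X j) a := by
    rw [φ, comp_aeval_apply]
    refine congrArg (fun v => (aeval v : P3 k →ₐ[k] P3 k) a) ?_
    funext j
    fin_cases j
    · show φ k (X 0 * X 2) = (X 2 : P3 k) ^ 3 * X 0
      rw [map_mul, φ_X0, φ_X2]; ring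
    · show φ k (X 0 ^ 2 - X 1 * X 2) = (X 2 : P3 k) ^ 3 * X 1
      rw [map_sub, map_pow, map_mul, φ_X0, φ_X1, φ_X2]; ring
    · show φ k (X 2 ^ 2) = (X 2 : P3 k) ^ 3 * X 2
      rw [map_pow, φ_X2]; ring
  rw [hcomp, aeval_scale k ha]

lemma φφ_f : φ k (φ k (fP k)) = X 2 ^ 6 * fP k := (φφ k (hf k)).trans (by norm_num)
lemma φφ_g : φ k (φ k (gP k)) = X 2 ^ 9 * gP k := (φφ k (hg k)).trans (by norm_num)

/-- cancel lemma in a localization. -/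
lemma mk_cancel {M : Submonoid (P3 k)} (a : P3 k) (s : M) :
    Localization.mk ((s : P3 k) * a) s = algebraMap (P3 k) (Localization M) a := by
  rw [Localization.mk_eq_mk', IsLocalization.mk'_mul_cancel_left]

lemma z_unit_g : IsUnit (algebraMap (P3 k) (Localization.Away (gP k)) (X 2)) := by
  refine IsUnit.of_mul_eq_one (Localization.mk (qP k) ⟨gP k, ⟨1, pow_one _⟩⟩) ?_
  rw [← Localization.mk_one_eq_algebraMap, Localization.mk_mul, one_mul]
  have h : (X 2 : P3 k) * qP k = gP k := by ring
  rw [h]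
  exact Localization.mk_self (⟨gP k, ⟨1, pow_one _⟩⟩ : Submonoid.powers (gP k))

lemma z_unit_f : IsUnit (algebraMap (P3 k) (Localization.Away (fP k)) (X 2)) := by
  refine IsUnit.of_mul_eq_one (Localization.mk (X 1) ⟨fP k, ⟨1, pow_one _⟩⟩) ?_
  rw [← Localization.mk_one_eq_algebraMap, Localization.mk_mul, one_mul]
  have h : (X 2 : P3 k) * X 1 = fP k := by ring
  rw [h]
  exact Localization.mk_self (⟨fP k, ⟨1, pow_one _⟩⟩ : Submonoid.powers (fP k))

lemma f_unit_f : IsUnit (algebraMap (P3 k) (Localization.Away (fP k)) (fP k)) :=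
  IsLocalization.Away.algebraMap_isUnit _

lemma g_unit_g : IsUnit (algebraMap (P3 k) (Localization.Away (gP k)) (gP k)) :=
  IsLocalization.Away.algebraMap_isUnit _

lemma φf_unit : IsUnit
    ((algebraMap (P3 k) (Localization.Away (gP k))).comp (φ k).toRingHom (fP k)) := by
  have h : ((algebraMap (P3 k) (Localization.Away (gP k))).comp (φ k).toRingHom) (fP k)
      = algebraMap (P3 k) (Localization.Away (gP k)) (gP k * X 2) := by
    rw [RingHom.comp_apply]
    exact congrArg _ (φ_f k)
  rw [h, map_mul]
  exact (g_unit_g k).mul (z_unit_g k)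

lemma φg_unit : IsUnit
    ((algebraMap (P3 k) (Localization.Away (fP k))).comp (φ k).toRingHom (gP k)) := by
  have h : ((algebraMap (P3 k) (Localization.Away (fP k))).comp (φ k).toRingHom) (gP k)
      = algebraMap (P3 k) (Localization.Away (fP k)) (fP k * X 2 ^ 4) := by
    rw [RingHom.comp_apply]
    exact congrArg _ (φ_g k)
  rw [h, map_mul, map_pow]
  exact (f_unit_f k).mul ((z_unit_f k).pow 4)

/-- The induced map on localizations `k[x,y,z]_{(yz)} → k[x,y,z]_{((x²−yz)z)}`. -/
noncomputable def Φ : Localization.Away (fP k) →+* Localization.Away (gP k) :=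
  IsLocalization.Away.lift (fP k) (φf_unit k)

/-- The induced map on localizations in the other direction. -/
noncomputable def Ψ : Localization.Away (gP k) →+* Localization.Away (fP k) :=
  IsLocalization.Away.lift (gP k) (φg_unit k)

lemma Φ_algebraMap (a : P3 k) :
    Φ k (algebraMap (P3 k) (Localization.Away (fP k)) a)
      = algebraMap (P3 k) (Localization.Away (gP k)) (φ k a) :=
  IsLocalization.Away.lift_eq _ _ _

lemma Ψ_algebraMap (a : P3 k) :
    Ψ k (algebraMap (P3 k) (Localization.Away (gP k)) a)
      = algebraMap (P3 k) (Localization.Away (fP k)) (φ k a) :=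
  IsLocalization.Away.lift_eq _ _ _

lemma algebraMap_mul_mk {h : P3 k} (a b : P3 k) (s : Submonoid.powers h) :
    algebraMap (P3 k) (Localization.Away h) b * Localization.mk a s
      = Localization.mk (b * a) s := by
  rw [← Localization.mk_one_eq_algebraMap, Localization.mk_mul, one_mul]

lemma Φ_mk (a : P3 k) (n : ℕ) (mem : fP k ^ n ∈ Submonoid.powers (fP k))
    (mem2 : gP k ^ (2 * n) ∈ Submonoid.powers (gP k)) :
    Φ k (Localization.mk a ⟨fP k ^ n, mem⟩)
      = Localization.mk (φ k a * qP k ^ n) ⟨gP k ^ (2 * n), mem2⟩ := by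
  have hu : IsUnit (algebraMap (P3 k) (Localization.Away (gP k)) (φ k (fP k) ^ n)) := by
    rw [φ_f, mul_pow, map_mul, map_pow, map_pow]
    exact ((g_unit_g k).pow n).mul ((z_unit_g k).pow n)
  refine hu.mul_left_cancel ?_
  have h1 : algebraMap (P3 k) (Localization.Away (gP k)) (φ k (fP k) ^ n) *
      Φ k (Localization.mk a ⟨fP k ^ n, mem⟩)
        = algebraMap (P3 k) (Localization.Away (gP k)) (φ k a) := by
    rw [← map_pow (φ k), ← Φ_algebraMap, ← map_mul, algebraMap_mul_mk,
      mk_cancel k a (⟨fP k ^ n, mem⟩ : Submonoid.powers (fP k)), Φ_algebraMap]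
  rw [h1, algebraMap_mul_mk]
  have key : ∀ (q z u : P3 k) (n : ℕ), (q * z * z) ^ n * (u * q ^ n) = (q * z) ^ (2 * n) * u := by
    intros; ring
  have h2 : φ k (fP k) ^ n * (φ k a * qP k ^ n) = gP k ^ (2 * n) * φ k a := by
    rw [φ_f]
    exact key (qP k) (X 2) (φ k a) n
  rw [h2, mk_cancel k (φ k a) (⟨gP k ^ (2 * n), mem2⟩ : Submonoid.powers (gP k))]

lemma Ψ_mk (b : P3 k) (m : ℕ) (mem : gP k ^ m ∈ Submonoid.powers (gP k))
    (mem2 : fP k ^ (5 * m) ∈ Submonoid.powers (fP k)) :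
    Ψ k (Localization.mk b ⟨gP k ^ m, mem⟩)
      = Localization.mk (φ k b * X 1 ^ (4 * m)) ⟨fP k ^ (5 * m), mem2⟩ := by
  have hpow : φ k (gP k) ^ m = fP k ^ m * X 2 ^ (4 * m) := by
    rw [φ_g, mul_pow, ← pow_mul]
  have hu : IsUnit (algebraMap (P3 k) (Localization.Away (fP k)) (φ k (gP k) ^ m)) := by
    rw [hpow, map_mul, map_pow, map_pow]
    exact ((f_unit_f k).pow m).mul ((z_unit_f k).pow (4 * m))
  refine hu.mul_left_cancel ?_
  have h1 : algebraMap (P3 k) (Localization.Away (fP k)) (φ k (gP k) ^ m) *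
      Ψ k (Localization.mk b ⟨gP k ^ m, mem⟩)
        = algebraMap (P3 k) (Localization.Away (fP k)) (φ k b) := by
    rw [← map_pow (φ k), ← Ψ_algebraMap, ← map_mul, algebraMap_mul_mk,
      mk_cancel k b (⟨gP k ^ m, mem⟩ : Submonoid.powers (gP k)), Ψ_algebraMap]
  rw [h1, algebraMap_mul_mk]
  have key : ∀ (y z u : P3 k) (m : ℕ),
      (y * z * z ^ 4) ^ m * (u * y ^ (4 * m)) = (y * z) ^ (5 * m) * u := by
    intros; ring
  have h2 : φ k (gP k) ^ m * (φ k b * X 1 ^ (4 * m)) = fP k ^ (5 * m) * φ k b := by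
    rw [φ_g]
    exact key (X 1) (X 2) (φ k b) m
  rw [h2, mk_cancel k (φ k b) (⟨fP k ^ (5 * m), mem2⟩ : Submonoid.powers (fP k))]

lemma ΨΦ_mk (a : P3 k) (n : ℕ) (mem : fP k ^ n ∈ Submonoid.powers (fP k))
    (ha : a.IsHomogeneous (2 * n)) :
    Ψ k (Φ k (Localization.mk a ⟨fP k ^ n, mem⟩)) = Localization.mk a ⟨fP k ^ n, mem⟩ := by
  have hpow : φ k (φ k (fP k)) ^ n = X 2 ^ (6 * n) * fP k ^ n := by
    rw [φφ_f, mul_pow, ← pow_mul]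
  have hu : IsUnit (algebraMap (P3 k) (Localization.Away (fP k)) (φ k (φ k (fP k)) ^ n)) := by
    rw [hpow, map_mul, map_pow, map_pow]
    exact ((z_unit_f k).pow (6 * n)).mul ((f_unit_f k).pow n)
  refine hu.mul_left_cancel ?_
  have h1 : algebraMap (P3 k) (Localization.Away (fP k)) (φ k (φ k (fP k)) ^ n) *
      Ψ k (Φ k (Localization.mk a ⟨fP k ^ n, mem⟩))
        = algebraMap (P3 k) (Localization.Away (fP k)) (φ k (φ k a)) := by
    rw [← map_pow (φ k), ← map_pow (φ k), ← Ψ_algebraMap, ← Φ_algebraMap, ← map_mul (Ψ k),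
      ← map_mul (Φ k), algebraMap_mul_mk,
      mk_cancel k a (⟨fP k ^ n, mem⟩ : Submonoid.powers (fP k)), Φ_algebraMap, Ψ_algebraMap]
  rw [h1, algebraMap_mul_mk, φφ k ha, φφ_f]
  have key : ∀ (y z u : P3 k) (n : ℕ),
      (z ^ 6 * (y * z)) ^ n * u = (y * z) ^ n * (z ^ (3 * (2 * n)) * u) := by
    intros; ring
  have h2 : (X 2 ^ 6 * fP k : P3 k) ^ n * a = fP k ^ n * (X 2 ^ (3 * (2 * n)) * a) :=
    key (X 1) (X 2) a n
  rw [h2, mk_cancel k _ (⟨fP k ^ n, mem⟩ : Submonoid.powers (fP k))]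

lemma ΦΨ_mk (b : P3 k) (m : ℕ) (mem : gP k ^ m ∈ Submonoid.powers (gP k))
    (hb : b.IsHomogeneous (3 * m)) :
    Φ k (Ψ k (Localization.mk b ⟨gP k ^ m, mem⟩)) = Localization.mk b ⟨gP k ^ m, mem⟩ := by
  have hpow : φ k (φ k (gP k)) ^ m = X 2 ^ (9 * m) * gP k ^ m := by
    rw [φφ_g, mul_pow, ← pow_mul]
  have hu : IsUnit (algebraMap (P3 k) (Localization.Away (gP k)) (φ k (φ k (gP k)) ^ m)) := by
    rw [hpow, map_mul, map_pow, map_pow]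
    exact ((z_unit_g k).pow (9 * m)).mul ((g_unit_g k).pow m)
  refine hu.mul_left_cancel ?_
  have h1 : algebraMap (P3 k) (Localization.Away (gP k)) (φ k (φ k (gP k)) ^ m) *
      Φ k (Ψ k (Localization.mk b ⟨gP k ^ m, mem⟩))
        = algebraMap (P3 k) (Localization.Away (gP k)) (φ k (φ k b)) := by
    rw [← map_pow (φ k), ← map_pow (φ k), ← Φ_algebraMap, ← Ψ_algebraMap, ← map_mul (Φ k),
      ← map_mul (Ψ k), algebraMap_mul_mk,
      mk_cancel k b (⟨gP k ^ m, mem⟩ : Submonoid.powers (gP k)), Ψ_algebraMap, Φ_algebraMap]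
  rw [h1, algebraMap_mul_mk, φφ k hb, φφ_g]
  have key : ∀ (q z u : P3 k) (m : ℕ),
      (z ^ 9 * (q * z)) ^ m * u = (q * z) ^ m * (z ^ (3 * (3 * m)) * u) := by
    intros; ring
  have h2 : (X 2 ^ 9 * gP k : P3 k) ^ m * b = gP k ^ m * (X 2 ^ (3 * (3 * m)) * b) :=
    key (qP k) (X 2) b m
  rw [h2, mk_cancel k _ (⟨gP k ^ m, mem⟩ : Submonoid.powers (gP k))]

open HomogeneousLocalization in
lemma existsF (x : AwayRing k (fP k)) : ∃ y : AwayRing k (gP k), y.val = Φ k x.val := by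
  obtain ⟨c, rfl⟩ := mk_surjective x
  obtain ⟨n, hn⟩ := c.den_mem
  have hden : (c.den : P3 k).IsHomogeneous c.deg := c.den.2
  have hnum : (c.num : P3 k).IsHomogeneous c.deg := c.num.2
  have hfn : (c.den : P3 k).IsHomogeneous (2 * n) := by
    rw [← hn]; exact (hf k).pow n
  have hne : (c.den : P3 k) ≠ 0 := by
    rw [← hn]; exact pow_ne_zero _ (f_ne k)
  have hdeg : c.deg = 2 * n := hden.inj_right hfn hne
  have memg : gP k ^ (2 * n) ∈ Submonoid.powers (gP k) := ⟨2 * n, rfl⟩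
  refine ⟨HomogeneousLocalization.mk
    ⟨2 * c.deg + 2 * n, ⟨φ k c.num * qP k ^ n, ?_⟩, ⟨gP k ^ (2 * n), ?_⟩, memg⟩, ?_⟩
  · rw [mem_homogeneousSubmodule]; exact (φ_mem k hnum).mul ((hq k).pow n)
  · have h3 : 2 * c.deg + 2 * n = 3 * (2 * n) := by rw [hdeg]; ring
    rw [mem_homogeneousSubmodule, h3]
    exact (hg k).pow (2 * n)
  · rw [HomogeneousLocalization.val_mk, HomogeneousLocalization.val_mk]
    have hsub : (⟨(c.den : P3 k), c.den_mem⟩ : Submonoid.powers (fP k))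
        = ⟨fP k ^ n, ⟨n, rfl⟩⟩ := Subtype.ext hn.symm
    rw [hsub]
    exact (Φ_mk k _ n _ memg).symm

open HomogeneousLocalization in
lemma existsG (x : AwayRing k (gP k)) : ∃ y : AwayRing k (fP k), y.val = Ψ k x.val := by
  obtain ⟨c, rfl⟩ := mk_surjective x
  obtain ⟨m, hm⟩ := c.den_mem
  have hden : (c.den : P3 k).IsHomogeneous c.deg := c.den.2
  have hnum : (c.num : P3 k).IsHomogeneous c.deg := c.num.2
  have hgm : (c.den : P3 k).IsHomogeneous (3 * m) := by
    rw [← hm]; exact (hg k).pow m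
  have hne : (c.den : P3 k) ≠ 0 := by
    rw [← hm]; exact pow_ne_zero _ (g_ne k)
  have hdeg : c.deg = 3 * m := hden.inj_right hgm hne
  have memf : fP k ^ (5 * m) ∈ Submonoid.powers (fP k) := ⟨5 * m, rfl⟩
  refine ⟨HomogeneousLocalization.mk
    ⟨2 * c.deg + 4 * m, ⟨φ k c.num * X 1 ^ (4 * m), ?_⟩, ⟨fP k ^ (5 * m), ?_⟩, memf⟩, ?_⟩
  · rw [mem_homogeneousSubmodule]; exact (φ_mem k hnum).mul (isHomogeneous_X_pow (1 : Fin 3) (4 * m))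
  · have h3 : 2 * c.deg + 4 * m = 2 * (5 * m) := by rw [hdeg]; ring
    rw [mem_homogeneousSubmodule, h3]
    exact (hf k).pow (5 * m)
  · rw [HomogeneousLocalization.val_mk, HomogeneousLocalization.val_mk]
    have hsub : (⟨(c.den : P3 k), c.den_mem⟩ : Submonoid.powers (gP k))
        = ⟨gP k ^ m, ⟨m, rfl⟩⟩ := Subtype.ext hm.symm
    rw [hsub]
    exact (Ψ_mk k _ m _ memf).symm

noncomputable def F₀ (x : AwayRing k (fP k)) : AwayRing k (gP k) := (existsF k x).choose

lemma F₀_val (x : AwayRing k (fP k)) : (F₀ k x).val = Φ k x.val := (existsF k x).choose_spec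

noncomputable def G₀ (x : AwayRing k (gP k)) : AwayRing k (fP k) := (existsG k x).choose

lemma G₀_val (x : AwayRing k (gP k)) : (G₀ k x).val = Ψ k x.val := (existsG k x).choose_spec

open HomogeneousLocalization in
lemma ΨΦ_val (x : AwayRing k (fP k)) : Ψ k (Φ k x.val) = x.val := by
  obtain ⟨c, rfl⟩ := mk_surjective x
  obtain ⟨n, hn⟩ := c.den_mem
  have hden : (c.den : P3 k).IsHomogeneous c.deg := c.den.2
  have hnum : (c.num : P3 k).IsHomogeneous c.deg := c.num.2
  have hfn : (c.den : P3 k).IsHomogeneous (2 * n) := by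
    rw [← hn]; exact (hf k).pow n
  have hne : (c.den : P3 k) ≠ 0 := by
    rw [← hn]; exact pow_ne_zero _ (f_ne k)
  have hdeg : c.deg = 2 * n := hden.inj_right hfn hne
  rw [HomogeneousLocalization.val_mk]
  have hsub : (⟨(c.den : P3 k), c.den_mem⟩ : Submonoid.powers (fP k))
      = ⟨fP k ^ n, ⟨n, rfl⟩⟩ := Subtype.ext hn.symm
  rw [hsub]
  exact ΨΦ_mk k _ n _ (hdeg ▸ hnum)

open HomogeneousLocalization in
lemma ΦΨ_val (x : AwayRing k (gP k)) : Φ k (Ψ k x.val) = x.val := by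
  obtain ⟨c, rfl⟩ := mk_surjective x
  obtain ⟨m, hm⟩ := c.den_mem
  have hden : (c.den : P3 k).IsHomogeneous c.deg := c.den.2
  have hnum : (c.num : P3 k).IsHomogeneous c.deg := c.num.2
  have hgm : (c.den : P3 k).IsHomogeneous (3 * m) := by
    rw [← hm]; exact (hg k).pow m
  have hne : (c.den : P3 k) ≠ 0 := by
    rw [← hm]; exact pow_ne_zero _ (g_ne k)
  have hdeg : c.deg = 3 * m := hden.inj_right hgm hne
  rw [HomogeneousLocalization.val_mk]
  have hsub : (⟨(c.den : P3 k), c.den_mem⟩ : Submonoid.powers (gP k))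
      = ⟨gP k ^ m, ⟨m, rfl⟩⟩ := Subtype.ext hm.symm
  rw [hsub]
  exact ΦΨ_mk k _ m _ (hdeg ▸ hnum)

lemma val_algebraMap (h : P3 k) (c : k) :
    (algebraMap k (AwayRing k h) c).val
      = algebraMap (P3 k) (Localization.Away h) (MvPolynomial.C c) := by
  have h0 : algebraMap k (AwayRing k h) c =
      HomogeneousLocalization.fromZeroRingHom (homogeneousSubmodule (Fin 3) k)
        (Submonoid.powers h) (algebraMap k (homogeneousSubmodule (Fin 3) k 0) c) := rfl
  rw [h0]
  show (HomogeneousLocalization.mk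
    ⟨0, algebraMap k (homogeneousSubmodule (Fin 3) k 0) c, 1, one_mem _⟩).val = _
  rw [HomogeneousLocalization.val_mk]
  have h1 : ((algebraMap k (homogeneousSubmodule (Fin 3) k 0) c :
      homogeneousSubmodule (Fin 3) k 0) : P3 k) = MvPolynomial.C c := rfl
  have h2 : (⟨((1 : homogeneousSubmodule (Fin 3) k 0) : P3 k), one_mem _⟩ :
      Submonoid.powers h) = 1 := Subtype.ext rfl
  rw [h1, h2, Localization.mk_one_eq_algebraMap]

set_option synthInstance.maxHeartbeats 400000 in
/-- The isomorphism. -/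
noncomputable def E : AwayRing k (fP k) ≃ₐ[k] AwayRing k (gP k) where
  toFun := F₀ k
  invFun := G₀ k
  left_inv x := HomogeneousLocalization.val_injective _ (by
    rw [G₀_val, F₀_val, ΨΦ_val])
  right_inv x := HomogeneousLocalization.val_injective _ (by
    rw [F₀_val, G₀_val, ΦΨ_val])
  map_mul' x y := HomogeneousLocalization.val_injective _ (by
    rw [HomogeneousLocalization.val_mul, F₀_val, F₀_val, F₀_val,
      HomogeneousLocalization.val_mul, map_mul (Φ k)])
  map_add' x y := HomogeneousLocalization.val_injective _ (by
    rw [HomogeneousLocalization.val_add, F₀_val, F₀_val, F₀_val,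
      HomogeneousLocalization.val_add, map_add (Φ k)])
  commutes' c := HomogeneousLocalization.val_injective _ (by
    rw [F₀_val, val_algebraMap, val_algebraMap, Φ_algebraMap]
    congr 1
    have h3 : (MvPolynomial.C c : P3 k) = algebraMap k (P3 k) c := rfl
    rw [h3, AlgHom.commutes])

end Rmk22

/-- Remark 2.2: the reducible curves `{yz = 0}` (degree 2) and `{(x² − yz)z = 0}`
(degree 3) have isomorphic complements in `ℙ²`: the degree-zero localizations away from
`y·z` and away from `(x² − y·z)·z` are isomorphic as `k`-algebras. In particular the
equal-degree conclusion of Lemma 2.1 fails for reducible curves. -/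
theorem complement_iso_of_reducible_curves (k : Type) [Field k] [IsAlgClosed k] :
    Nonempty
      (AwayRing k ((X 1 : MvPolynomial (Fin 3) k) * X 2) ≃ₐ[k]
        AwayRing k (((X 0 : MvPolynomial (Fin 3) k) ^ 2 - X 1 * X 2) * X 2)) := by
  exact ⟨Rmk22.E k⟩
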